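/- Strong isomorphism classifies equivalence of homomorphisms: with K₁, K₂ the reduced subspaces of linearly minimal dilations (π₁,...) and (π₂,...) of a finite-dimensional linear system, the homomorphisms π₁ and π₂ are equivalent (π₁(a) = R⁻¹π₂(a)R for some linear isomorphism R : W₁ → W₂ and all a) if and only if K₁ and K₂ are strongly isomorphic inside W = A⊗V. -/

import Mathlib

open scoped TensorProduct

variable (k : Type*) [Field k] (A : Type*) [Ring A] [Algebra k A]
  (V : Type*) [AddCommGroup V] [Module k V]

/-- The universal homomorphism `π_u(a)(b ⊗ x) = (ab) ⊗ x` on `A ⊗ V`. -/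
noncomputable def piU : A →ₐ[k] Module.End k (A ⊗[k] V) where
  toFun a := LinearMap.rTensor V (LinearMap.mulLeft k a)
  map_one' := by ext b v; simp
  map_mul' a b := by ext c v; simp [mul_assoc]
  map_zero' := by ext a v; simp
  map_add' a b := by ext c v; simp [add_mul, TensorProduct.add_tmul]
  commutes' c := by
    ext a v
    simp [Algebra.algebraMap_eq_smul_one, smul_mul_assoc, TensorProduct.smul_tmul']

/-- The universal analysis operator `T(x) = 1 ⊗ x`. -/
noncomputable def Tu : V →ₗ[k] A ⊗[k] V := TensorProduct.mk k A V 1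

/-- The universal synthesis operator `S(a ⊗ x) = φ(a) x`. -/
noncomputable def Su (φ : A →ₗ[k] Module.End k V) : A ⊗[k] V →ₗ[k] V :=
  TensorProduct.lift (φ : A →ₗ[k] V →ₗ[k] V)

/-- The linear map `A ⊗ V → W₁`, `a ⊗ x ↦ π₁(a) T₁ x`; its kernel is the reduced
subspace associated with the dilation system `(π₁, S₁, T₁, W₁)`. -/
noncomputable def Theta (W₁ : Type*) [AddCommGroup W₁] [Module k W₁]
    (π₁ : A →ₐ[k] Module.End k W₁) (T₁ : V →ₗ[k] W₁) : A ⊗[k] V →ₗ[k] W₁ :=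
  TensorProduct.lift ((LinearMap.lcomp k W₁ T₁) ∘ₗ π₁.toLinearMap)

/-- `Θ` intertwines the universal homomorphism with `π₁`. -/
lemma theta_piU (W₁ : Type*) [AddCommGroup W₁] [Module k W₁]
    (π₁ : A →ₐ[k] Module.End k W₁) (T₁ : V →ₗ[k] W₁) (a : A) (w : A ⊗[k] V) :
    Theta k A V W₁ π₁ T₁ (piU k A V a w) = π₁ a (Theta k A V W₁ π₁ T₁ w) := by
  induction w using TensorProduct.induction_on with
  | zero => simp
  | tmul b x =>
      show Theta k A V W₁ π₁ T₁ ((a * b) ⊗ₜ x) = π₁ a (π₁ b (T₁ x))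
      show π₁ (a * b) (T₁ x) = _
      simp [map_mul, Module.End.mul_apply]
  | add u v hu hv => simp [map_add, hu, hv]

/-- Linear minimality of a dilation means exactly that `Θ` is surjective. -/
lemma theta_surj (W₁ : Type*) [AddCommGroup W₁] [Module k W₁]
    (π₁ : A →ₐ[k] Module.End k W₁) (T₁ : V →ₗ[k] W₁)
    (hmin₁ : Submodule.span k {w : W₁ | ∃ (a : A) (x : V), w = π₁ a (T₁ x)} = ⊤) :
    Function.Surjective (Theta k A V W₁ π₁ T₁) := by
  rw [← LinearMap.range_eq_top, eq_top_iff, ← hmin₁, Submodule.span_le]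
  rintro w ⟨a, x, rfl⟩
  exact ⟨a ⊗ₜ x, rfl⟩

/-- A surjective map restricted to a complement of its kernel is bijective. -/
lemma restrict_bijective {k : Type*} [Field k] {M : Type*} [AddCommGroup M] [Module k M]
    {W : Type*} [AddCommGroup W] [Module k W] (Θ : M →ₗ[k] W)
    (hs : Function.Surjective Θ) (C : Submodule k M)
    (hC : IsCompl (LinearMap.ker Θ) C) : Function.Bijective (Θ ∘ₗ C.subtype) := by
  constructor
  · intro c c' h
    have hmem : ((c - c' : C) : M) ∈ LinearMap.ker Θ := by
      simp only [LinearMap.mem_ker, Submodule.coe_sub, map_sub]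
      simpa [sub_eq_zero] using h
    have h0 : ((c - c' : C) : M) = 0 :=
      Submodule.disjoint_def.mp hC.disjoint _ hmem (c - c').2
    have : c - c' = 0 := by exact_mod_cast h0
    exact sub_eq_zero.mp this
  · intro w
    obtain ⟨u, rfl⟩ := hs w
    have hu : u ∈ LinearMap.ker Θ ⊔ C := by rw [hC.sup_eq_top]; trivial
    obtain ⟨y, hy, z, hz, rfl⟩ := Submodule.mem_sup.1 hu
    exact ⟨⟨z, hz⟩, by simp [LinearMap.mem_ker.1 hy]⟩

lemma quotKer_apply_mk {k : Type*} [Field k] {M : Type*} [AddCommGroup M] [Module k M]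
    {W : Type*} [AddCommGroup W] [Module k W] (Θ : M →ₗ[k] W)
    (hs : Function.Surjective Θ) (u : M) :
    Θ.quotKerEquivOfSurjective hs (Submodule.Quotient.mk u) = Θ u := rfl

lemma quotient_equiv_apply_mk {k : Type*} [Field k] {M : Type*} [AddCommGroup M] [Module k M]
    (K₁ K₂ : Submodule k M) (Rt : M ≃ₗ[k] M) (hmap : K₁.map (Rt : M →ₗ[k] M) = K₂) (u : M) :
    Submodule.Quotient.equiv K₁ K₂ Rt hmap (Submodule.Quotient.mk u) =
      Submodule.Quotient.mk (Rt u) := by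
  rw [Submodule.Quotient.equiv_apply, Submodule.mapQ_apply]; rfl

/-- with `K₁, K₂` the reduced subspaces of two linearly minimal dilations of
a finite-dimensional linear system, the homomorphisms `π₁` and `π₂` are equivalent iff
`K₁` and `K₂` are strongly isomorphic inside `W = A ⊗ V`, i.e. iff there is a linear
isomorphism `R : W ≃ W` with `R(K₁) = K₂` and `π_u(a) R w - R π_u(a) w ∈ K₂` for all
`a ∈ A`, `w ∈ W`. -/
theorem homomorphisms_equivalent_iff_strongly_isomorphic
    [FiniteDimensional k A] [FiniteDimensional k V]
    (φ : A →ₗ[k] Module.End k V) (hφ : φ 1 = 1)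
    (W₁ : Type*) [AddCommGroup W₁] [Module k W₁]
    (W₂ : Type*) [AddCommGroup W₂] [Module k W₂]
    (π₁ : A →ₐ[k] Module.End k W₁) (T₁ : V →ₗ[k] W₁) (S₁ : W₁ →ₗ[k] V)
    (hT₁ : Function.Injective T₁) (hS₁ : Function.Surjective S₁)
    (hdil₁ : ∀ a : A, (φ a : V →ₗ[k] V) = S₁ ∘ₗ (π₁ a : W₁ →ₗ[k] W₁) ∘ₗ T₁)
    (hmin₁ : Submodule.span k {w : W₁ | ∃ (a : A) (x : V), w = π₁ a (T₁ x)} = ⊤)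
    (π₂ : A →ₐ[k] Module.End k W₂) (T₂ : V →ₗ[k] W₂) (S₂ : W₂ →ₗ[k] V)
    (hT₂ : Function.Injective T₂) (hS₂ : Function.Surjective S₂)
    (hdil₂ : ∀ a : A, (φ a : V →ₗ[k] V) = S₂ ∘ₗ (π₂ a : W₂ →ₗ[k] W₂) ∘ₗ T₂)
    (hmin₂ : Submodule.span k {w : W₂ | ∃ (a : A) (x : V), w = π₂ a (T₂ x)} = ⊤) :
    (∃ R : W₁ ≃ₗ[k] W₂, ∀ (a : A) (w : W₁), R (π₁ a w) = π₂ a (R w)) ↔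
      ∃ R : (A ⊗[k] V) ≃ₗ[k] (A ⊗[k] V),
        (LinearMap.ker (Theta k A V W₁ π₁ T₁)).map (R : A ⊗[k] V →ₗ[k] A ⊗[k] V) =
          LinearMap.ker (Theta k A V W₂ π₂ T₂) ∧
        ∀ (a : A) (w : A ⊗[k] V),
          piU k A V a (R w) - R (piU k A V a w) ∈ LinearMap.ker (Theta k A V W₂ π₂ T₂) := by
  set Θ₁ := Theta k A V W₁ π₁ T₁ with hΘ₁
  set Θ₂ := Theta k A V W₂ π₂ T₂ with hΘ₂
  have hs₁ : Function.Surjective Θ₁ := theta_surj k A V W₁ π₁ T₁ hmin₁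
  have hs₂ : Function.Surjective Θ₂ := theta_surj k A V W₂ π₂ T₂ hmin₂
  constructor
  · rintro ⟨R, hR⟩
    haveI : FiniteDimensional k W₁ := Module.Finite.of_surjective Θ₁ hs₁
    haveI : FiniteDimensional k W₂ := Module.Finite.of_surjective Θ₂ hs₂
    have hr₁ := Θ₁.finrank_range_add_finrank_ker
    have hr₂ := Θ₂.finrank_range_add_finrank_ker
    rw [LinearMap.range_eq_top.2 hs₁, finrank_top] at hr₁
    rw [LinearMap.range_eq_top.2 hs₂, finrank_top] at hr₂
    have hW : Module.finrank k W₁ = Module.finrank k W₂ := R.finrank_eq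
    have hK : Module.finrank k (LinearMap.ker Θ₁) = Module.finrank k (LinearMap.ker Θ₂) := by
      omega
    haveI := Module.Free.of_divisionRing k (LinearMap.ker Θ₁)
    haveI := Module.Free.of_divisionRing k (LinearMap.ker Θ₂)
    obtain ⟨eK⟩ := FiniteDimensional.nonempty_linearEquiv_of_finrank_eq hK
    obtain ⟨C₁, hC₁⟩ := Submodule.exists_isCompl (LinearMap.ker Θ₁)
    obtain ⟨C₂, hC₂⟩ := Submodule.exists_isCompl (LinearMap.ker Θ₂)
    have hb₁ := restrict_bijective Θ₁ hs₁ C₁ hC₁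
    have hb₂ := restrict_bijective Θ₂ hs₂ C₂ hC₂
    set e₁ := LinearEquiv.ofBijective _ hb₁ with he₁
    set e₂ := LinearEquiv.ofBijective _ hb₂ with he₂
    set eC : (C₁ : Submodule k (A ⊗[k] V)) ≃ₗ[k] C₂ := e₁ ≪≫ₗ R ≪≫ₗ e₂.symm with heC
    set Rt : (A ⊗[k] V) ≃ₗ[k] (A ⊗[k] V) :=
      (Submodule.prodEquivOfIsCompl _ C₁ hC₁).symm ≪≫ₗ (eK.prodCongr eC) ≪≫ₗ
        (Submodule.prodEquivOfIsCompl _ C₂ hC₂) with hRt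
    have key : ∀ w, Θ₂ (Rt w) = R (Θ₁ w) := by
      intro w
      have hw : w ∈ LinearMap.ker Θ₁ ⊔ C₁ := by rw [hC₁.sup_eq_top]; trivial
      obtain ⟨y, hy, z, hz, rfl⟩ := Submodule.mem_sup.1 hw
      have h1 : Rt (y + z) = (eK ⟨y, hy⟩ : A ⊗[k] V) + (eC ⟨z, hz⟩ : A ⊗[k] V) := by
        have hsy : (Submodule.prodEquivOfIsCompl _ C₁ hC₁).symm (y + z) = (⟨y, hy⟩, ⟨z, hz⟩) := by
          rw [LinearEquiv.symm_apply_eq, Submodule.coe_prodEquivOfIsCompl']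
        simp [hRt, hsy, Submodule.coe_prodEquivOfIsCompl']
      rw [h1, map_add, map_add]
      have hy0 : Θ₁ y = 0 := hy
      have hK2 : Θ₂ ((eK ⟨y, hy⟩ : LinearMap.ker Θ₂) : A ⊗[k] V) = 0 := (eK ⟨y, hy⟩).2
      have hz2 : Θ₂ ((eC ⟨z, hz⟩ : C₂) : A ⊗[k] V) = R (Θ₁ z) := by
        have hco : ∀ c : C₂, Θ₂ (c : A ⊗[k] V) = e₂ c := fun c => rfl
        rw [hco]
        show e₂ (e₂.symm (R (e₁ ⟨z, hz⟩))) = _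
        rw [e₂.apply_symm_apply]
        rfl
      rw [hK2, hz2, hy0]; simp
    refine ⟨Rt, ?_, ?_⟩
    · apply le_antisymm
      · rintro _ ⟨u, hu, rfl⟩
        have hu0 : Θ₁ u = 0 := hu
        simp only [LinearMap.mem_ker, LinearEquiv.coe_coe]
        rw [key, hu0, map_zero]
      · intro u hu
        refine ⟨Rt.symm u, ?_, by simp⟩
        have hkey : Θ₂ (Rt (Rt.symm u)) = R (Θ₁ (Rt.symm u)) := key _
        rw [Rt.apply_symm_apply] at hkey
        have hu0 : Θ₂ u = 0 := hu
        have : R (Θ₁ (Rt.symm u)) = 0 := by rw [← hkey, hu0]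
        exact LinearMap.mem_ker.2 (R.map_eq_zero_iff.1 this)
    · intro a w
      show Θ₂ (piU k A V a (Rt w) - Rt (piU k A V a w)) = 0
      rw [map_sub, theta_piU, key, key, theta_piU, hR, sub_self]
  · rintro ⟨Rt, hmap, hcomm⟩
    set q₁ := Θ₁.quotKerEquivOfSurjective hs₁ with hq₁
    set q₂ := Θ₂.quotKerEquivOfSurjective hs₂ with hq₂
    set qe := Submodule.Quotient.equiv (LinearMap.ker Θ₁) (LinearMap.ker Θ₂) Rt hmap with hqe
    refine ⟨q₁.symm ≪≫ₗ qe ≪≫ₗ q₂, ?_⟩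
    have key : ∀ u : A ⊗[k] V,
        (q₁.symm ≪≫ₗ qe ≪≫ₗ q₂) (Θ₁ u) = Θ₂ (Rt u) := by
      intro u
      have h1 : q₁.symm (Θ₁ u) = Submodule.Quotient.mk u := by
        rw [LinearEquiv.symm_apply_eq]; exact (quotKer_apply_mk Θ₁ hs₁ u).symm
      simp only [LinearEquiv.trans_apply, h1]
      rw [hqe, quotient_equiv_apply_mk, hq₂, quotKer_apply_mk]
    intro a w
    obtain ⟨u, rfl⟩ := hs₁ w
    rw [← theta_piU, key, key, ← theta_piU]
    have h0 : Θ₂ (piU k A V a (Rt u) - Rt (piU k A V a u)) = 0 := hcomm a u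
    rw [map_sub, sub_eq_zero] at h0
    rw [← h0, theta_piU]
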